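/- Let k ≥ 1 and let s be a spin vector of length k. Then the Hamiltonian H_1(s) = (1/2)·((k−2) + Σ_{i=0}^{k−1} s_i)^2 (a rational number) satisfies H_1(s) ≥ 0, and H_1(s) = 0 if and only if s is a spin one-hot vector, i.e., there is exactly one index i with s_i = +1 and all other entries equal −1. -/
import Mathlib


/-- The Ising Hamiltonian `H₁(s) = ½((k-2) + Σ sᵢ)²` for a spin vector `s` of length `k`
is nonnegative, and is zero iff `s` is a spin one-hot vector (exactly one entry is +1). -/
theorem spin_one_hot_hamiltonian (k : ℕ) (hk : 1 ≤ k) (s : ℕ → ℤ)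
    (hs : ∀ i < k, s i = -1 ∨ s i = 1) :
    0 ≤ (1 / 2 : ℚ) * ((k : ℚ) - 2 + ∑ i ∈ Finset.range k, (s i : ℚ)) ^ 2 ∧
    ((1 / 2 : ℚ) * ((k : ℚ) - 2 + ∑ i ∈ Finset.range k, (s i : ℚ)) ^ 2 = 0 ↔
      ∃! i, i < k ∧ s i = 1) := by
  classical
  set A : Finset ℕ := (Finset.range k).filter (fun i => s i = 1) with hA
  have hmem : ∀ i, i ∈ A ↔ i < k ∧ s i = 1 := by
    intro i; simp [hA, Finset.mem_filter, Finset.mem_range]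
  have hsum : ∑ i ∈ Finset.range k, (s i : ℚ) = 2 * (A.card : ℚ) - k := by
    rw [← Finset.sum_filter_add_sum_filter_not (Finset.range k) (fun i => s i = 1)]
    have h1 : ∑ i ∈ (Finset.range k).filter (fun i => s i = 1), (s i : ℚ)
        = (A.card : ℚ) := by
      have := Finset.sum_congr (rfl : (Finset.range k).filter (fun i => s i = 1) = _)
        (fun i hi => by
          simp only [Finset.mem_filter] at hi
          rw [hi.2] : ∀ i ∈ _, (s i : ℚ) = ((1:ℤ) : ℚ))
      rw [this]; simp [hA]
    have h2 : ∑ i ∈ (Finset.range k).filter (fun i => ¬ s i = 1), (s i : ℚ)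
        = -(((Finset.range k).filter (fun i => ¬ s i = 1)).card : ℚ) := by
      have := Finset.sum_congr (rfl : (Finset.range k).filter (fun i => ¬ s i = 1) = _)
        (fun i hi => by
          simp only [Finset.mem_filter, Finset.mem_range] at hi
          rcases hs i hi.1 with h | h
          · rw [h]
          · exact absurd h hi.2 : ∀ i ∈ _, (s i : ℚ) = ((-1:ℤ) : ℚ))
      rw [this]; simp
    rw [h1, h2]
    have hcard : A.card + ((Finset.range k).filter (fun i => ¬ s i = 1)).card = k := by
      rw [hA, Finset.card_filter_add_card_filter_not, Finset.card_range]
    have := congrArg (fun n : ℕ => (n : ℚ)) hcard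
    push_cast at this ⊢
    linarith
  have key : (k : ℚ) - 2 + ∑ i ∈ Finset.range k, (s i : ℚ)
      = 2 * ((A.card : ℚ) - 1) := by rw [hsum]; ring
  constructor
  · positivity
  · rw [key]
    have hiff : ((1 : ℚ)/2) * (2 * ((A.card : ℚ) - 1)) ^ 2 = 0 ↔ A.card = 1 := by
      constructor
      · intro h
        have : (A.card : ℚ) = 1 := by nlinarith [sq_nonneg ((A.card : ℚ) - 1)]
        exact_mod_cast this
      · intro h; rw [h]; norm_num
    rw [hiff]
    rw [Finset.card_eq_one]
    constructor
    · rintro ⟨a, ha⟩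
      refine ⟨a, ?_, ?_⟩
      · exact (hmem a).1 (by simp [ha])
      · intro j hj
        have : j ∈ A := (hmem j).2 hj
        rw [ha, Finset.mem_singleton] at this; exact this
    · rintro ⟨a, ha, huniq⟩
      refine ⟨a, Finset.eq_singleton_iff_unique_mem.2 ⟨(hmem a).2 ha, ?_⟩⟩
      intro j hj; exact huniq j ((hmem j).1 hj)
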